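/- Let σ: E(K_{4n}) → {-1,1} and let M be a perfect matching of K_{4n} minimizing |σ(M)|, with σ(M) > 0. Then for every two edges u1u2, v1v2 of M with σ(u1u2) = σ(v1v2) = 1, if σ(u1v1) = −1 then σ(u2v2) = −1. -/

import Mathlib

open Finset

noncomputable def sumE {m : ℕ} (σ : Sym2 (Fin m) → ℤ) (S : Set (Sym2 (Fin m))) : ℤ :=
  ∑ e ∈ S.toFinite.toFinset, σ e

def Kc (m : ℕ) : SimpleGraph (Fin m) := ⊤

theorem stmt5 (n : ℕ) (hn : 0 < n) (σ : Sym2 (Fin (4*n)) → ℤ)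
    (hσ : ∀ e ∈ (Kc (4*n)).edgeSet, σ e = 1 ∨ σ e = -1)
    (M : (Kc (4*n)).Subgraph) (hM : M.IsPerfectMatching)
    (hmin : ∀ N : (Kc (4*n)).Subgraph, N.IsPerfectMatching →
      |sumE σ M.edgeSet| ≤ |sumE σ N.edgeSet|)
    (hpos : 0 < sumE σ M.edgeSet)
    (u1 u2 v1 v2 : Fin (4*n))
    (he : s(u1,u2) ∈ M.edgeSet) (hf : s(v1,v2) ∈ M.edgeSet)
    (hef : s(u1,u2) ≠ s(v1,v2))
    (he1 : σ s(u1,u2) = 1) (hf1 : σ s(v1,v2) = 1)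
    (hcross : σ s(u1,v1) = -1) :
    σ s(u2,v2) = -1 := by
  classical
  by_contra hne
  have he' : M.Adj u1 u2 := SimpleGraph.Subgraph.mem_edgeSet.mp he
  have hf' : M.Adj v1 v2 := SimpleGraph.Subgraph.mem_edgeSet.mp hf
  have uniq : ∀ v a b : Fin (4*n), M.Adj v a → M.Adj v b → a = b :=
    fun v a b ha hb => ((hM.1 (hM.2 v)).unique ha hb)
  have h12 : u1 ≠ u2 := he'.ne
  have h34 : v1 ≠ v2 := hf'.ne
  have h13 : u1 ≠ v1 := by
    intro h; subst h
    exact hef (by rw [uniq u1 u2 v2 he' hf'])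
  have h14 : u1 ≠ v2 := by
    intro h; subst h
    have : u2 = v1 := uniq u1 u2 v1 he' hf'.symm
    subst this
    exact hef (Sym2.eq_swap)
  have h23 : u2 ≠ v1 := by
    intro h; subst h
    have : u1 = v2 := uniq u2 u1 v2 he'.symm hf'
    subst this
    exact hef (Sym2.eq_swap)
  have h24 : u2 ≠ v2 := by
    intro h; subst h
    have : u1 = v1 := uniq u2 u1 v1 he'.symm hf'.symm
    subst this
    exact hef rfl
  -- σ s(u2,v2) = 1
  have hf'1 : σ s(u2,v2) = 1 := by
    rcases hσ s(u2,v2) (by simpa [Kc] using h24) with h | h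
    · exact h
    · exact absurd h hne
  -- new edges are not in M
  have he'notM : s(u1,v1) ∉ M.edgeSet := by
    intro h
    exact h23 (uniq u1 u2 v1 he' (SimpleGraph.Subgraph.mem_edgeSet.mp h))
  have hf'notM : s(u2,v2) ∉ M.edgeSet := by
    intro h
    exact h14 (uniq u2 u1 v2 he'.symm (SimpleGraph.Subgraph.mem_edgeSet.mp h))
  have hcrossne : s(u1,v1) ≠ s(u2,v2) := by
    intro h
    rcases Sym2.eq_iff.mp h with ⟨h1, -⟩ | ⟨h1, -⟩
    · exact h12 h1
    · exact h14 h1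
  -- the swapped matching
  set P : Sym2 (Fin (4*n)) → Prop :=
    fun x => (x ∈ M.edgeSet ∧ x ≠ s(u1,u2) ∧ x ≠ s(v1,v2)) ∨ x = s(u1,v1) ∨ x = s(u2,v2)
    with hP
  have hPne : ∀ a b : Fin (4*n), P s(a,b) → a ≠ b := by
    intro a b h
    rcases h with ⟨h, -, -⟩ | h | h
    · exact (SimpleGraph.Subgraph.mem_edgeSet.mp h).ne
    · rcases Sym2.eq_iff.mp h with ⟨rfl, rfl⟩ | ⟨rfl, rfl⟩
      · exact h13
      · exact h13.symm
    · rcases Sym2.eq_iff.mp h with ⟨rfl, rfl⟩ | ⟨rfl, rfl⟩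
      · exact h24
      · exact h24.symm
  set N : (Kc (4*n)).Subgraph :=
    { verts := Set.univ
      Adj := fun a b => P s(a,b)
      adj_sub := fun {a b} h => by
        simpa [Kc] using hPne a b h
      edge_vert := fun _ => Set.mem_univ _
      symm := ⟨fun a b h => by show P s(b,a); rw [Sym2.eq_swap]; exact h⟩ }
    with hN
  have hNadj : ∀ a b : Fin (4*n), N.Adj a b ↔ P s(a,b) := fun a b => Iff.rfl
  -- N is a perfect matching
  have hNpm : N.IsPerfectMatching := by
    rw [SimpleGraph.Subgraph.isPerfectMatching_iff]
    intro v
    by_cases hv1 : v = u1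
    · rw [hv1]
      refine ⟨v1, Or.inr (Or.inl rfl), ?_⟩
      intro w hw
      rcases hw with ⟨hw, hw1, -⟩ | hw | hw
      · exact absurd (congrArg (s(u1, ·)) (uniq u1 w u2 (SimpleGraph.Subgraph.mem_edgeSet.mp hw) he')) hw1
      · rcases Sym2.eq_iff.mp hw with ⟨-, rfl⟩ | ⟨h, -⟩
        · rfl
        · exact absurd h h13
      · rcases Sym2.eq_iff.mp hw with ⟨h, -⟩ | ⟨h, -⟩
        · exact absurd h h12
        · exact absurd h h14
    · by_cases hv2 : v = v1
      · rw [hv2]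
        refine ⟨u1, Or.inr (Or.inl (Sym2.eq_swap)), ?_⟩
        intro w hw
        rcases hw with ⟨hw, -, hw2⟩ | hw | hw
        · exact absurd (congrArg (s(v1, ·)) (uniq v1 w v2 (SimpleGraph.Subgraph.mem_edgeSet.mp hw) hf')) hw2
        · rcases Sym2.eq_iff.mp hw with ⟨h, -⟩ | ⟨-, rfl⟩
          · exact absurd h h13.symm
          · rfl
        · rcases Sym2.eq_iff.mp hw with ⟨h, -⟩ | ⟨h, -⟩
          · exact absurd h h23.symm
          · exact absurd h h34
      · by_cases hv3 : v = u2
        · rw [hv3]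
          refine ⟨v2, Or.inr (Or.inr rfl), ?_⟩
          intro w hw
          rcases hw with ⟨hw, hw1, -⟩ | hw | hw
          · have := uniq u2 w u1 (SimpleGraph.Subgraph.mem_edgeSet.mp hw) he'.symm
            subst this
            exact absurd Sym2.eq_swap hw1
          · rcases Sym2.eq_iff.mp hw with ⟨h, -⟩ | ⟨h, -⟩
            · exact absurd h h12.symm
            · exact absurd h h23
          · rcases Sym2.eq_iff.mp hw with ⟨-, rfl⟩ | ⟨h, -⟩
            · rfl
            · exact absurd h h24
        · by_cases hv4 : v = v2
          · rw [hv4]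
            refine ⟨u2, Or.inr (Or.inr (Sym2.eq_swap)), ?_⟩
            intro w hw
            rcases hw with ⟨hw, -, hw2⟩ | hw | hw
            · have := uniq v2 w v1 (SimpleGraph.Subgraph.mem_edgeSet.mp hw) hf'.symm
              subst this
              exact absurd Sym2.eq_swap hw2
            · rcases Sym2.eq_iff.mp hw with ⟨h, -⟩ | ⟨h, -⟩
              · exact absurd h h14.symm
              · exact absurd h h34.symm
            · rcases Sym2.eq_iff.mp hw with ⟨h, -⟩ | ⟨-, rfl⟩
              · exact absurd h h24.symm
              · rfl
          · -- v is untouched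
            obtain ⟨w, hw, hwu⟩ := hM.1 (hM.2 v)
            refine ⟨w, Or.inl ⟨SimpleGraph.Subgraph.mem_edgeSet.mpr hw, ?_, ?_⟩, ?_⟩
            · intro h
              rcases Sym2.eq_iff.mp h with ⟨h1, -⟩ | ⟨h1, -⟩
              · exact hv1 h1
              · exact hv3 h1
            · intro h
              rcases Sym2.eq_iff.mp h with ⟨h1, -⟩ | ⟨h1, -⟩
              · exact hv2 h1
              · exact hv4 h1
            · intro w' hw'
              rcases hw' with ⟨hw', -, -⟩ | hw' | hw'
              · exact hwu w' (SimpleGraph.Subgraph.mem_edgeSet.mp hw')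
              · rcases Sym2.eq_iff.mp hw' with ⟨h1, -⟩ | ⟨h1, -⟩
                · exact absurd h1 hv1
                · exact absurd h1 hv2
              · rcases Sym2.eq_iff.mp hw' with ⟨h1, -⟩ | ⟨h1, -⟩
                · exact absurd h1 hv3
                · exact absurd h1 hv4
  -- edge sets as finsets
  set F : Finset (Sym2 (Fin (4*n))) := M.edgeSet.toFinite.toFinset with hF
  set FN : Finset (Sym2 (Fin (4*n))) := N.edgeSet.toFinite.toFinset with hFN
  have hmemF : ∀ x, x ∈ F ↔ x ∈ M.edgeSet := fun x => Set.Finite.mem_toFinset _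
  have hmemFN : ∀ x, x ∈ FN ↔ x ∈ N.edgeSet := fun x => Set.Finite.mem_toFinset _
  have hFNeq : FN = (F \ {s(u1,u2), s(v1,v2)}) ∪ {s(u1,v1), s(u2,v2)} := by
    ext x
    induction x using Sym2.ind with
    | _ a b =>
      rw [hmemFN, SimpleGraph.Subgraph.mem_edgeSet]
      simp only [Finset.mem_union, Finset.mem_sdiff, Finset.mem_insert, Finset.mem_singleton,
        hmemF]
      constructor
      · rintro (⟨h1, h2, h3⟩ | h | h)
        · exact Or.inl ⟨h1, by tauto⟩
        · exact Or.inr (Or.inl h)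
        · exact Or.inr (Or.inr h)
      · rintro (⟨h1, h2⟩ | h | h)
        · exact Or.inl ⟨h1, by tauto⟩
        · exact Or.inr (Or.inl h)
        · exact Or.inr (Or.inr h)
  -- the sums
  have hsub : ({s(u1,u2), s(v1,v2)} : Finset (Sym2 (Fin (4*n)))) ⊆ F := by
    intro x hx
    rcases Finset.mem_insert.mp hx with rfl | hx
    · exact (hmemF _).mpr he
    · rw [Finset.mem_singleton.mp hx, hmemF]; exact hf
  have hdisj : Disjoint (F \ {s(u1,u2), s(v1,v2)}) ({s(u1,v1), s(u2,v2)} : Finset _) := by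
    rw [Finset.disjoint_right]
    intro x hx hx'
    rcases Finset.mem_insert.mp hx with rfl | hx
    · exact he'notM ((hmemF _).mp (Finset.mem_sdiff.mp hx').1)
    · rw [Finset.mem_singleton.mp hx] at hx'
      exact hf'notM ((hmemF _).mp (Finset.mem_sdiff.mp hx').1)
  have hsumN : sumE σ N.edgeSet = sumE σ M.edgeSet - 2 := by
    show ∑ e ∈ FN, σ e = (∑ e ∈ F, σ e) - 2
    rw [hFNeq, Finset.sum_union hdisj, Finset.sum_pair hcrossne, hcross, hf'1]
    have := Finset.sum_sdiff (f := σ) hsub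
    rw [Finset.sum_pair hef, he1, hf1] at this
    linarith
  -- parity: sum over M is even
  have hg : ∀ v : Fin (4*n), ∃ w, M.Adj v w := fun v => (hM.1 (hM.2 v)).exists
  set g : Fin (4*n) → Sym2 (Fin (4*n)) := fun v => s(v, (hg v).choose) with hgdef
  have hgadj : ∀ v, M.Adj v ((hg v).choose) := fun v => (hg v).choose_spec
  have himg : Finset.image g Finset.univ = F := by
    ext x
    induction x using Sym2.ind with
    | _ a b =>
      simp only [Finset.mem_image, Finset.mem_univ, true_and, hmemF,
        SimpleGraph.Subgraph.mem_edgeSet]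
      constructor
      · rintro ⟨v, hv⟩
        have hm : g v ∈ M.edgeSet := SimpleGraph.Subgraph.mem_edgeSet.mpr (hgadj v)
        rw [hv] at hm
        exact SimpleGraph.Subgraph.mem_edgeSet.mp hm
      · intro h
        exact ⟨a, congrArg (s(a, ·)) (uniq a _ b (hgadj a) h)⟩
  have hfiber : ∀ x ∈ F, (Finset.univ.filter fun v => g v = x).card = 2 := by
    intro x hx
    induction x using Sym2.ind with
    | _ a b =>
      have hab : M.Adj a b := SimpleGraph.Subgraph.mem_edgeSet.mp ((hmemF _).mp hx)
      have : (Finset.univ.filter fun v => g v = s(a,b)) = {a, b} := by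
        ext v
        simp only [Finset.mem_filter, Finset.mem_univ, true_and, Finset.mem_insert,
          Finset.mem_singleton]
        constructor
        · intro h
          have hv : v ∈ s(a,b) := h ▸ Sym2.mem_mk_left v _
          exact Sym2.mem_iff.mp hv
        · rintro (rfl | rfl)
          · exact congrArg (s(v, ·)) (uniq v _ b (hgadj v) hab)
          · have h3 := uniq v _ a (hgadj v) hab.symm
            exact (congrArg (s(v, ·)) h3).trans Sym2.eq_swap
      rw [this, Finset.card_pair hab.ne]
  have hcard : 2 * F.card = 4 * n := by
    have h0 := Finset.card_eq_sum_card_image g (Finset.univ : Finset (Fin (4*n)))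
    rw [himg, Finset.sum_congr rfl hfiber] at h0
    simp only [Finset.sum_const, smul_eq_mul, Finset.card_univ, Fintype.card_fin] at h0
    omega
  have hodd : ∀ x ∈ F, σ x % 2 = 1 := by
    intro x hx
    have hxE : x ∈ (Kc (4*n)).edgeSet := M.edgeSet_subset ((hmemF _).mp hx)
    rcases hσ x hxE with h | h <;> rw [h] <;> decide
  have heven : sumE σ M.edgeSet % 2 = 0 := by
    show (∑ e ∈ F, σ e) % 2 = 0
    rw [Finset.sum_int_mod, Finset.sum_congr rfl hodd, Finset.sum_const, nsmul_eq_mul, mul_one]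
    omega
  -- conclude
  have hbig : 2 ≤ sumE σ M.edgeSet := by omega
  have := hmin N hNpm
  rw [hsumN, abs_of_pos hpos, abs_of_nonneg (by omega : (0:ℤ) ≤ sumE σ M.edgeSet - 2)] at this
  omega
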